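/- Let Δ = (1/4)(x + x^{-1} + y + y^{-1}) be the Laplace operator acting on ℓ^2 of the discrete Heisenberg group H, let E be its spectral measure, and let μ(A) = (E(A)δ_e, δ_e) be the spectral measure at δ_e. Then for every α > 0 there is a constant c_1 > 0 such that for all sufficiently small t > 0, μ([-1, -1+t] ∪ [1-t, 1]) ≥ c_1 t^{2+α}. -/

import Mathlib

@[ext]
structure Heis (R : Type*) [CommRing R] where
  a : R
  b : R
  c : R
  deriving DecidableEq

namespace Heis
variable {R : Type*} [CommRing R]

instance : One (Heis R) := ⟨⟨0, 0, 0⟩⟩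
instance : Mul (Heis R) := ⟨fun p q => ⟨p.a + q.a, p.b + q.b, p.c + q.c + p.a * q.b⟩⟩
instance : Inv (Heis R) := ⟨fun p => ⟨-p.a, -p.b, -p.c + p.a * p.b⟩⟩

theorem mul_def (p q : Heis R) :
    p * q = ⟨p.a + q.a, p.b + q.b, p.c + q.c + p.a * q.b⟩ := rfl
theorem one_def : (1 : Heis R) = ⟨0, 0, 0⟩ := rfl
theorem inv_def (p : Heis R) : p⁻¹ = ⟨-p.a, -p.b, -p.c + p.a * p.b⟩ := rfl

instance : Group (Heis R) where
  mul_assoc p q r := by ext <;> simp [mul_def] <;> ring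
  one_mul p := by ext <;> simp [mul_def, one_def]
  mul_one p := by ext <;> simp [mul_def, one_def]
  inv_mul_cancel p := by ext <;> simp [mul_def, one_def, inv_def]

/-- generator x -/
def xgen : Heis R := ⟨1, 0, 0⟩
/-- generator y -/
def ygen : Heis R := ⟨0, 1, 0⟩

end Heis

namespace HeisAux
open Heis Finset

abbrev W (n : ℕ) := Fin n → Fin 4

def step : Fin 4 → Heis ℤ := ![xgen, xgen⁻¹, ygen, ygen⁻¹]

def wprod {n : ℕ} (w : W n) : Heis ℤ := (List.ofFn fun i => step (w i)).prod

@[simp] lemma wprod_zero (w : W 0) : wprod w = 1 := by simp [wprod]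

lemma wprod_cons {n : ℕ} (s : Fin 4) (w : W n) :
    wprod (Fin.cons s w) = step s * wprod w := by
  simp [wprod, List.ofFn_succ]

lemma wprod_snoc {n : ℕ} (s : Fin 4) (w : W n) :
    wprod (Fin.snoc w s) = wprod w * step s := by
  rw [wprod, List.ofFn_succ']
  simp [wprod, List.concat_eq_append]

lemma wprod_append {n m : ℕ} (u : W n) (v : W m) :
    wprod (Fin.append u v) = wprod u * wprod v := by
  rw [wprod, List.ofFn_add]
  simp [wprod, Fin.append_left, Fin.append_right]

def cnt (n : ℕ) (g : Heis ℤ) : ℕ :=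
  (Finset.univ.filter fun w : W n => wprod w = g).card

lemma cnt_eq_sum (n : ℕ) (g : Heis ℤ) :
    cnt n g = ∑ w : W n, if wprod w = g then 1 else 0 :=
  Finset.card_filter _ _

lemma cnt_zero (g : Heis ℤ) : cnt 0 g = if g = 1 then 1 else 0 := by
  rw [cnt_eq_sum, Fintype.sum_subsingleton _ (fun _ => (0 : Fin 4))]
  simp [eq_comm]

lemma sum_cons {n : ℕ} {M : Type*} [AddCommMonoid M] (F : W (n + 1) → M) :
    ∑ w : W (n + 1), F w = ∑ s : Fin 4, ∑ w : W n, F (Fin.cons s w) := by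
  rw [← (Fin.consEquiv fun _ : Fin (n + 1) => Fin 4).sum_comp F, Fintype.sum_prod_type]
  rfl

lemma sum_snoc {n : ℕ} {M : Type*} [AddCommMonoid M] (F : W (n + 1) → M) :
    ∑ w : W (n + 1), F w = ∑ s : Fin 4, ∑ w : W n, F (Fin.snoc w s) := by
  rw [← (Fin.snocEquiv fun _ : Fin (n + 1) => Fin 4).sum_comp F, Fintype.sum_prod_type]
  rfl

lemma cnt_succ (n : ℕ) (h : Heis ℤ) :
    cnt (n + 1) h = ∑ s : Fin 4, cnt n ((step s)⁻¹ * h) := by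
  rw [cnt_eq_sum, sum_cons]
  refine Finset.sum_congr rfl fun s _ => ?_
  rw [cnt_eq_sum]
  refine Finset.sum_congr rfl fun w _ => ?_
  rw [wprod_cons]
  congr 1
  simp [eq_inv_mul_iff_mul_eq]

lemma cnt_succ' (n : ℕ) (h : Heis ℤ) :
    cnt (n + 1) h = ∑ s : Fin 4, cnt n (h * (step s)⁻¹) := by
  rw [cnt_eq_sum, sum_snoc]
  refine Finset.sum_congr rfl fun s _ => ?_
  rw [cnt_eq_sum]
  refine Finset.sum_congr rfl fun w _ => ?_
  rw [wprod_snoc]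
  congr 1
  simp [eq_mul_inv_iff_mul_eq]

def inv4 : Fin 4 → Fin 4 := ![1, 0, 3, 2]

lemma inv4_invol : Function.Involutive inv4 := by
  intro s; fin_cases s <;> rfl

lemma step_inv4 (s : Fin 4) : step (inv4 s) = (step s)⁻¹ := by
  fin_cases s <;> rfl

lemma cnt_inv (n : ℕ) : ∀ g : Heis ℤ, cnt n g⁻¹ = cnt n g := by
  induction n with
  | zero => intro g; simp [cnt_zero, inv_eq_one]
  | succ n ih =>
    intro g
    rw [cnt_succ, cnt_succ' n g]
    have h1 : ∀ s, cnt n ((step s)⁻¹ * g⁻¹) = cnt n (g * step s) := fun s => by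
      rw [← mul_inv_rev, ih]
    simp_rw [h1]
    refine Fintype.sum_bijective inv4 inv4_invol.bijective _ _ fun s => ?_
    rw [step_inv4, inv_inv]

lemma cnt_two (n : ℕ) : cnt (n + n) 1 = ∑ u : W n, cnt n ((wprod u)⁻¹) := by
  rw [cnt_eq_sum, ← (Fin.appendEquiv n n).sum_comp, Fintype.sum_prod_type]
  refine Finset.sum_congr rfl fun u _ => ?_
  rw [cnt_eq_sum]
  refine Finset.sum_congr rfl fun v _ => ?_
  have : (Fin.appendEquiv n n) (u, v) = Fin.append u v := rfl
  rw [this, wprod_append]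
  congr 1
  rw [mul_eq_one_iff_inv_eq]
  exact propext eq_comm

lemma card_W (n : ℕ) : Fintype.card (W n) = 4 ^ n := by
  simp [Fintype.card_fun]

lemma sum_step_a (p : Heis ℤ) : ∑ s : Fin 4, ((step s * p).a) ^ 2 = 4 * p.a ^ 2 + 2 := by
  simp [Fin.sum_univ_four, step, Heis.mul_def, xgen, ygen, Heis.inv_def]
  ring

lemma sum_step_b (p : Heis ℤ) : ∑ s : Fin 4, ((step s * p).b) ^ 2 = 4 * p.b ^ 2 + 2 := by
  simp [Fin.sum_univ_four, step, Heis.mul_def, xgen, ygen, Heis.inv_def]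
  ring

lemma sum_step_c (p : Heis ℤ) :
    ∑ s : Fin 4, ((step s * p).c) ^ 2 = 4 * p.c ^ 2 + 2 * p.b ^ 2 := by
  simp [Fin.sum_univ_four, step, Heis.mul_def, xgen, ygen, Heis.inv_def]
  ring

def Sa (n : ℕ) : ℤ := ∑ w : W n, ((wprod w).a) ^ 2
def Sb (n : ℕ) : ℤ := ∑ w : W n, ((wprod w).b) ^ 2
def Sc (n : ℕ) : ℤ := ∑ w : W n, ((wprod w).c) ^ 2

lemma moment_succ (n : ℕ) (F G : Heis ℤ → ℤ)
    (h : ∀ p, ∑ s : Fin 4, F (step s * p) = G p) :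
    ∑ w : W (n + 1), F (wprod w) = ∑ w : W n, G (wprod w) := by
  rw [sum_cons fun w => F (wprod w)]
  simp_rw [wprod_cons]
  rw [Finset.sum_comm]
  exact Finset.sum_congr rfl fun w _ => h _

lemma Sb_succ (n : ℕ) : Sb (n + 1) = 4 * Sb n + 2 * 4 ^ n := by
  have h := moment_succ n (fun p => p.b ^ 2) (fun p => 4 * p.b ^ 2 + 2) sum_step_b
  rw [Sb, h, Finset.sum_add_distrib, ← Finset.mul_sum, Finset.sum_const, card_univ, card_W,
    ← Sb]
  push_cast
  ring

lemma Sa_succ (n : ℕ) : Sa (n + 1) = 4 * Sa n + 2 * 4 ^ n := by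
  have h := moment_succ n (fun p => p.a ^ 2) (fun p => 4 * p.a ^ 2 + 2) sum_step_a
  rw [Sa, h, Finset.sum_add_distrib, ← Finset.mul_sum, Finset.sum_const, card_univ, card_W,
    ← Sa]
  push_cast
  ring

lemma Sc_succ (n : ℕ) : Sc (n + 1) = 4 * Sc n + 2 * Sb n := by
  have h := moment_succ n (fun p => p.c ^ 2) (fun p => 4 * p.c ^ 2 + 2 * p.b ^ 2) sum_step_c
  rw [Sc, h, Finset.sum_add_distrib, ← Finset.mul_sum, ← Finset.mul_sum, ← Sc, ← Sb]

lemma Sa_zero : Sa 0 = 0 := by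
  rw [Sa, Fintype.sum_subsingleton _ (fun _ => (0 : Fin 4))]
  simp [one_def]

lemma Sb_zero : Sb 0 = 0 := by
  rw [Sb, Fintype.sum_subsingleton _ (fun _ => (0 : Fin 4))]
  simp [one_def]

lemma Sc_zero : Sc 0 = 0 := by
  rw [Sc, Fintype.sum_subsingleton _ (fun _ => (0 : Fin 4))]
  simp [one_def]

lemma two_Sa (n : ℕ) : 2 * Sa n = n * 4 ^ n := by
  induction n with
  | zero => simp [Sa_zero]
  | succ n ih =>
    rw [Sa_succ]
    push_cast
    push_cast at ih
    ring_nf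
    ring_nf at ih
    nlinarith [ih]

lemma two_Sb (n : ℕ) : 2 * Sb n = n * 4 ^ n := by
  induction n with
  | zero => simp [Sb_zero]
  | succ n ih =>
    rw [Sb_succ]
    push_cast
    push_cast at ih
    ring_nf
    ring_nf at ih
    nlinarith [ih]

lemma Sa_nonneg (n : ℕ) : 0 ≤ Sa n := Finset.sum_nonneg fun w _ => sq_nonneg _
lemma Sb_nonneg (n : ℕ) : 0 ≤ Sb n := Finset.sum_nonneg fun w _ => sq_nonneg _
lemma Sc_nonneg (n : ℕ) : 0 ≤ Sc n := Finset.sum_nonneg fun w _ => sq_nonneg _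

lemma Sa_le (n : ℕ) : Sa n ≤ n * 4 ^ n := by
  have h := two_Sa n
  have := Sa_nonneg n
  linarith

lemma Sb_le (n : ℕ) : Sb n ≤ n * 4 ^ n := by
  have h := two_Sb n
  have := Sb_nonneg n
  linarith

lemma Sc_le (n : ℕ) : Sc n ≤ (n : ℤ) ^ 2 * 4 ^ n := by
  induction n with
  | zero => simp [Sc_zero]
  | succ n ih =>
    rw [Sc_succ]
    have hb := two_Sb n
    have h4 : (0 : ℤ) < 4 ^ n := by positivity
    have hn : (0 : ℤ) ≤ (n : ℤ) := Int.natCast_nonneg n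
    push_cast
    push_cast at ih hb
    rw [pow_succ (4 : ℤ) n]
    nlinarith [ih, hb, mul_nonneg hn h4.le]

/-- Chebyshev-type counting bound. -/
lemma cheb_count {n : ℕ} (f : Heis ℤ → ℤ) (t S : ℤ)
    (hsum : ∑ w : W n, f (wprod w) ^ 2 ≤ S) :
    ((Finset.univ.filter fun w : W n => t < f (wprod w) ^ 2).card : ℤ) * t ≤ S := by
  set s := Finset.univ.filter fun w : W n => t < f (wprod w) ^ 2 with hs
  calc (s.card : ℤ) * t = s.card • t := by rw [nsmul_eq_mul]
    _ ≤ ∑ w ∈ s, f (wprod w) ^ 2 := Finset.card_nsmul_le_sum s _ t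
        (fun w hw => le_of_lt (Finset.mem_filter.mp hw).2)
    _ ≤ ∑ w : W n, f (wprod w) ^ 2 := Finset.sum_le_sum_of_subset_of_nonneg
        (Finset.subset_univ s) (fun w _ _ => sq_nonneg _)
    _ ≤ S := hsum

noncomputable def box (n : ℕ) : Finset (Heis ℤ) :=
  ((Finset.Icc (-(Nat.sqrt (16 * n) : ℤ)) (Nat.sqrt (16 * n))) ×ˢ
    (Finset.Icc (-(Nat.sqrt (16 * n) : ℤ)) (Nat.sqrt (16 * n))) ×ˢ
    (Finset.Icc (-(4 * (n : ℤ))) (4 * n))).image fun p => ⟨p.1, p.2.1, p.2.2⟩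

lemma abs_le_of_sq_le_16n {x : ℤ} {n : ℕ} (h : x ^ 2 ≤ 16 * n) :
    -(Nat.sqrt (16 * n) : ℤ) ≤ x ∧ x ≤ (Nat.sqrt (16 * n) : ℤ) := by
  have h1 : (x.natAbs : ℤ) * x.natAbs = x * x := Int.natAbs_mul_self' x
  have h2 : x.natAbs * x.natAbs ≤ 16 * n := by
    have : (x.natAbs : ℤ) * x.natAbs ≤ ((16 * n : ℕ) : ℤ) := by
      rw [h1]; push_cast; nlinarith [h]
    exact_mod_cast this
  have h3 : x.natAbs ≤ Nat.sqrt (16 * n) := Nat.le_sqrt.mpr h2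
  have h4 : |x| ≤ (Nat.sqrt (16 * n) : ℤ) := by
    rw [Int.abs_eq_natAbs]; exact_mod_cast h3
  exact abs_le.mp h4

lemma mem_box {n : ℕ} {g : Heis ℤ} (ha : g.a ^ 2 ≤ 16 * n) (hb : g.b ^ 2 ≤ 16 * n)
    (hc : g.c ^ 2 ≤ 16 * (n : ℤ) ^ 2) : g ∈ box n := by
  have hc' : -(4 * (n : ℤ)) ≤ g.c ∧ g.c ≤ 4 * n := by
    have h1 : (g.c.natAbs : ℤ) * g.c.natAbs = g.c * g.c := Int.natAbs_mul_self' g.c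
    have h2 : g.c.natAbs * g.c.natAbs ≤ (4 * n) * (4 * n) := by
      have : (g.c.natAbs : ℤ) * g.c.natAbs ≤ (((4 * n) * (4 * n) : ℕ) : ℤ) := by
        rw [h1]; push_cast; nlinarith [hc]
      exact_mod_cast this
    have h3 : g.c.natAbs ≤ 4 * n := by
      have := Nat.le_sqrt.mpr h2
      rwa [Nat.sqrt_eq (4 * n)] at this
    have h4 : |g.c| ≤ (4 * n : ℤ) := by
      rw [Int.abs_eq_natAbs]; exact_mod_cast h3
    exact abs_le.mp h4
  have ha' := abs_le_of_sq_le_16n ha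
  have hb' := abs_le_of_sq_le_16n hb
  refine Finset.mem_image.mpr ⟨(g.a, g.b, g.c), ?_, rfl⟩
  simp only [Finset.mem_product, Finset.mem_Icc]
  exact ⟨⟨ha'.1, ha'.2⟩, ⟨hb'.1, hb'.2⟩, hc'.1, hc'.2⟩

lemma card_box {n : ℕ} (hn : 1 ≤ n) : (box n).card ≤ 1296 * n ^ 2 := by
  have h1 : (box n).card ≤
      ((2 * Nat.sqrt (16 * n) + 1) * ((2 * Nat.sqrt (16 * n) + 1) * (8 * n + 1))) := by
    refine le_trans (Finset.card_image_le) ?_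
    rw [Finset.card_product, Finset.card_product]
    have hIcc : ∀ K : ℕ, (Finset.Icc (-(K : ℤ)) (K : ℤ)).card = 2 * K + 1 := by
      intro K
      rw [Int.card_Icc]
      omega
    have hIcc2 : (Finset.Icc (-(4 * (n : ℤ))) (4 * (n : ℤ))).card = 8 * n + 1 := by
      rw [Int.card_Icc]
      omega
    rw [hIcc, hIcc2]
  refine le_trans h1 ?_
  have hK : Nat.sqrt (16 * n) * Nat.sqrt (16 * n) ≤ 16 * n := Nat.sqrt_le _
  have hK1 : Nat.sqrt (16 * n) ≤ 16 * n := Nat.sqrt_le_self _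
  set K := Nat.sqrt (16 * n)
  have hs : (2 * K + 1) * (2 * K + 1) ≤ 144 * n := by nlinarith [hK, hK1, hn]
  calc (2 * K + 1) * ((2 * K + 1) * (8 * n + 1))
      = ((2 * K + 1) * (2 * K + 1)) * (8 * n + 1) := by ring
    _ ≤ (144 * n) * (9 * n) := Nat.mul_le_mul hs (by omega)
    _ ≤ 1296 * n ^ 2 := by ring_nf; omega
  

lemma sum_fiber (n : ℕ) (B : Finset (Heis ℤ)) (F : Heis ℤ → ℕ) :
    ∑ g ∈ B, cnt n g * F g
      = ∑ w ∈ Finset.univ.filter (fun w : W n => wprod w ∈ B), F (wprod w) := by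
  rw [← Finset.sum_fiberwise_of_maps_to (g := wprod)
    (fun w hw => (Finset.mem_filter.mp hw).2)]
  refine Finset.sum_congr rfl fun g hg => ?_
  rw [Finset.filter_filter]
  have hset : (Finset.univ.filter fun w : W n => wprod w ∈ B ∧ wprod w = g)
      = Finset.univ.filter fun w : W n => wprod w = g := by
    ext w
    simp only [Finset.mem_filter, Finset.mem_univ, true_and, and_iff_right_iff_imp]
    intro h; rw [h]; exact hg
  rw [hset, Finset.sum_congr rfl (fun w hw => by
      rw [(Finset.mem_filter.mp hw).2]), Finset.sum_const, cnt, smul_eq_mul]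

noncomputable def good (n : ℕ) : Finset (W n) := Finset.univ.filter fun w => wprod w ∈ box n

lemma good_card {n : ℕ} (hn : 1 ≤ n) : 4 ^ n ≤ 2 * (good n).card := by
  classical
  set K := Nat.sqrt (16 * n)
  -- bad sets
  set bA := Finset.univ.filter fun w : W n => (16 * n : ℤ) < (wprod w).a ^ 2 with hbA
  set bB := Finset.univ.filter fun w : W n => (16 * n : ℤ) < (wprod w).b ^ 2 with hbB
  set bC := Finset.univ.filter fun w : W n => (16 * (n : ℤ) ^ 2) < (wprod w).c ^ 2 with hbC
  have hnZ : (0 : ℤ) < (n : ℤ) := by exact_mod_cast hn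
  have h4 : (0 : ℤ) < 4 ^ n := by positivity
  have hA : 16 * (bA.card : ℤ) ≤ 4 ^ n := by
    have hch := cheb_count (n := n) (fun p => p.a) (16 * n) ((n : ℤ) * 4 ^ n) (Sa_le n)
    rw [← hbA] at hch
    have h2 : (16 * (bA.card : ℤ)) * n ≤ 4 ^ n * n := by nlinarith [hch]
    exact le_of_mul_le_mul_right h2 hnZ
  have hB : 16 * (bB.card : ℤ) ≤ 4 ^ n := by
    have hch := cheb_count (n := n) (fun p => p.b) (16 * n) ((n : ℤ) * 4 ^ n) (Sb_le n)
    rw [← hbB] at hch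
    have h2 : (16 * (bB.card : ℤ)) * n ≤ 4 ^ n * n := by nlinarith [hch]
    exact le_of_mul_le_mul_right h2 hnZ
  have hC : 16 * (bC.card : ℤ) ≤ 4 ^ n := by
    have hch := cheb_count (n := n) (fun p => p.c) (16 * (n : ℤ) ^ 2) ((n : ℤ) ^ 2 * 4 ^ n)
      (Sc_le n)
    rw [← hbC] at hch
    have hn2 : (0 : ℤ) < (n : ℤ) ^ 2 := by positivity
    have h2 : (16 * (bC.card : ℤ)) * (n : ℤ) ^ 2 ≤ 4 ^ n * (n : ℤ) ^ 2 := by nlinarith [hch]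
    exact le_of_mul_le_mul_right h2 hn2
  -- bad ⊆ bA ∪ bB ∪ bC
  have hsub : Finset.univ.filter (fun w : W n => ¬ wprod w ∈ box n) ⊆ bA ∪ bB ∪ bC := by
    intro w hw
    rw [Finset.mem_filter] at hw
    by_contra hcon
    simp only [Finset.mem_union, hbA, hbB, hbC, Finset.mem_filter, Finset.mem_univ, true_and,
      not_or, not_lt] at hcon
    exact hw.2 (mem_box hcon.1.1 hcon.1.2 hcon.2)
  have hcards : (good n).card + (Finset.univ.filter
      (fun w : W n => ¬ wprod w ∈ box n)).card = 4 ^ n := by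
    rw [good, Finset.card_filter_add_card_filter_not, Finset.card_univ, card_W]
  have hbadcard : (Finset.univ.filter (fun w : W n => ¬ wprod w ∈ box n)).card
      ≤ bA.card + bB.card + bC.card := by
    calc _ ≤ (bA ∪ bB ∪ bC).card := Finset.card_le_card hsub
      _ ≤ (bA ∪ bB).card + bC.card := Finset.card_union_le _ _
      _ ≤ bA.card + bB.card + bC.card := by
          have := Finset.card_union_le bA bB
          omega
  -- combine in ℤ
  have hAn : 16 * (bA.card : ℕ) ≤ 4 ^ n := by exact_mod_cast hA
  have hBn : 16 * (bB.card : ℕ) ≤ 4 ^ n := by exact_mod_cast hB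
  have hCn : 16 * (bC.card : ℕ) ≤ 4 ^ n := by exact_mod_cast hC
  omega

lemma master (n : ℕ) (hn : 1 ≤ n) : (16 : ℤ) ^ n ≤ 5184 * (n : ℤ) ^ 2 * cnt (n + n) 1 := by
  classical
  -- good.card = ∑ g in box, cnt n g
  have h1 : ∑ g ∈ box n, cnt n g = (good n).card := by
    have := sum_fiber n (box n) (fun _ => 1)
    simpa [good] using this
  -- Cauchy-Schwarz in ℕ
  have hCS : (∑ g ∈ box n, cnt n g) ^ 2 ≤ (box n).card * ∑ g ∈ box n, cnt n g ^ 2 :=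
    sq_sum_le_card_mul_sum_sq
  -- ∑ cnt² ≤ cnt (n+n) 1
  have h2 : ∑ g ∈ box n, cnt n g ^ 2 ≤ cnt (n + n) 1 := by
    have hfib := sum_fiber n (box n) (fun g => cnt n g⁻¹)
    have hsq : ∑ g ∈ box n, cnt n g ^ 2 = ∑ g ∈ box n, cnt n g * cnt n g⁻¹ := by
      refine Finset.sum_congr rfl fun g _ => ?_
      rw [cnt_inv, sq]
    rw [hsq, hfib, cnt_two]
    exact Finset.sum_le_sum_of_subset (Finset.subset_univ _)
  have h3 := good_card hn
  have h4 := card_box hn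
  -- combine: 16^n = (4^n)^2 ≤ (2 good)^2 ≤ 4 * (box.card * ∑ cnt²) ≤ 4*1296 n² cnt
  have hnat : 16 ^ n ≤ 5184 * n ^ 2 * cnt (n + n) 1 := by
    calc 16 ^ n = (4 ^ n) * (4 ^ n) := by rw [show (16 : ℕ) = 4 * 4 from rfl, mul_pow]
      _ ≤ (2 * (good n).card) * (2 * (good n).card) := Nat.mul_le_mul h3 h3
      _ = 4 * (good n).card ^ 2 := by ring
      _ = 4 * (∑ g ∈ box n, cnt n g) ^ 2 := by rw [h1]
      _ ≤ 4 * ((box n).card * ∑ g ∈ box n, cnt n g ^ 2) := Nat.mul_le_mul_left 4 hCS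
      _ ≤ 4 * ((1296 * n ^ 2) * cnt (n + n) 1) := by
          exact Nat.mul_le_mul_left 4 (Nat.mul_le_mul h4 h2)
      _ = 5184 * n ^ 2 * cnt (n + n) 1 := by ring
  exact_mod_cast hnat

@[simp] lemma step_eval0 : step 0 = xgen := rfl
@[simp] lemma step_eval1 : step 1 = xgen⁻¹ := rfl
@[simp] lemma step_eval2 : step 2 = ygen := rfl
@[simp] lemma step_eval3 : step 3 = (ygen : Heis ℤ)⁻¹ := rfl

lemma pow_delta (T : lp (fun _ : Heis ℤ => ℂ) 2 →L[ℂ] lp (fun _ : Heis ℤ => ℂ) 2)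
    (hT : ∀ (f : lp (fun _ : Heis ℤ => ℂ) 2) (g : Heis ℤ),
      (T f : ∀ _ : Heis ℤ, ℂ) g
        = (1 / 4 : ℂ) * ((f : ∀ _ : Heis ℤ, ℂ) (g * Heis.xgen)
          + (f : ∀ _ : Heis ℤ, ℂ) (g * Heis.xgen⁻¹)
          + (f : ∀ _ : Heis ℤ, ℂ) (g * Heis.ygen)
          + (f : ∀ _ : Heis ℤ, ℂ) (g * Heis.ygen⁻¹))) :
    ∀ (k : ℕ) (g : Heis ℤ),
      ((T ^ k) (lp.single 2 (1 : Heis ℤ) (1 : ℂ)) : ∀ _ : Heis ℤ, ℂ) g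
        = (1 / 4 : ℂ) ^ k * cnt k g⁻¹ := by
  intro k
  induction k with
  | zero =>
    intro g
    rw [pow_zero, ContinuousLinearMap.one_apply]
    by_cases hg : g = 1
    · subst hg
      rw [lp.single_apply_self]
      simp [cnt_zero]
    · rw [lp.single_apply_ne _ _ _ hg]
      simp [cnt_zero, inv_eq_one, hg]
  | succ k ih =>
    intro g
    rw [pow_succ', ContinuousLinearMap.mul_apply, hT, ih, ih, ih, ih]
    have hc : (cnt (k + 1) g⁻¹ : ℂ)
        = (cnt k (g * xgen)⁻¹ : ℂ) + cnt k (g * xgen⁻¹)⁻¹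
          + cnt k (g * ygen)⁻¹ + cnt k (g * ygen⁻¹)⁻¹ := by
      rw [cnt_succ k g⁻¹, Fin.sum_univ_four]
      simp only [step_eval0, step_eval1, step_eval2, step_eval3, ← mul_inv_rev]
      push_cast
      ring
    rw [pow_succ (1 / 4 : ℂ) k] at *
    rw [hc]
    ring

lemma moment_re (T : lp (fun _ : Heis ℤ => ℂ) 2 →L[ℂ] lp (fun _ : Heis ℤ => ℂ) 2)
    (hT : ∀ (f : lp (fun _ : Heis ℤ => ℂ) 2) (g : Heis ℤ),
      (T f : ∀ _ : Heis ℤ, ℂ) g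
        = (1 / 4 : ℂ) * ((f : ∀ _ : Heis ℤ, ℂ) (g * Heis.xgen)
          + (f : ∀ _ : Heis ℤ, ℂ) (g * Heis.xgen⁻¹)
          + (f : ∀ _ : Heis ℤ, ℂ) (g * Heis.ygen)
          + (f : ∀ _ : Heis ℤ, ℂ) (g * Heis.ygen⁻¹))) (k : ℕ) :
    (inner ℂ ((T ^ k) (lp.single 2 (1 : Heis ℤ) (1 : ℂ)))
        (lp.single 2 (1 : Heis ℤ) (1 : ℂ)) : ℂ).re = (cnt k 1 : ℝ) / 4 ^ k := by
  rw [lp.inner_single_right]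
  have h := pow_delta T hT k 1
  rw [inv_one] at h
  have h2 : ((T ^ k) (lp.single 2 (1 : Heis ℤ) (1 : ℂ)) : ∀ _ : Heis ℤ, ℂ) 1
      = (((cnt k 1 : ℝ) / 4 ^ k : ℝ) : ℂ) := by
    rw [h]
    push_cast
    simp [one_div]
    ring
  rw [h2, RCLike.inner_apply, one_mul, Complex.conj_ofReal, Complex.ofReal_re]

open MeasureTheory in
lemma key_integral (μ : Measure ℝ) [IsProbabilityMeasure μ]
    (hsupp : μ (Set.Icc (-1 : ℝ) 1)ᶜ = 0) (t : ℝ) (ht0 : 0 < t) (ht1 : t ≤ 1) (n : ℕ) :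
    ∫ x, x ^ (2 * n) ∂μ ≤ (1 - t) ^ (2 * n)
      + (μ (Set.Icc (-1 : ℝ) (-1 + t) ∪ Set.Icc (1 - t) 1)).toReal := by
  set E : Set ℝ := Set.Icc (-1 : ℝ) (-1 + t) ∪ Set.Icc (1 - t) 1 with hE
  have hEm : MeasurableSet E := (measurableSet_Icc.union measurableSet_Icc)
  have hae : ∀ᵐ x ∂μ, x ∈ Set.Icc (-1 : ℝ) 1 := by
    rw [MeasureTheory.ae_iff]
    exact hsupp
  have hgint : Integrable (fun x : ℝ => (1 - t) ^ (2 * n)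
      + E.indicator (fun _ => (1 : ℝ)) x) μ :=
    (integrable_const _).add ((integrable_const (1 : ℝ)).indicator hEm)
  have hle : ∀ᵐ x ∂μ, x ^ (2 * n) ≤ (1 - t) ^ (2 * n)
      + E.indicator (fun _ => (1 : ℝ)) x := by
    refine hae.mono fun x hx => ?_
    rcases Set.mem_Icc.mp hx with ⟨hx1, hx2⟩
    have hxabs : |x| ≤ 1 := abs_le.mpr ⟨hx1, hx2⟩
    by_cases hcase : |x| ≤ 1 - t
    · have h1 : x ^ (2 * n) ≤ (1 - t) ^ (2 * n) := by
        calc x ^ (2 * n) ≤ |x ^ (2 * n)| := le_abs_self _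
          _ = |x| ^ (2 * n) := abs_pow x (2 * n)
          _ ≤ (1 - t) ^ (2 * n) := pow_le_pow_left₀ (abs_nonneg x) hcase _
      have h2 : (0 : ℝ) ≤ E.indicator (fun _ => (1 : ℝ)) x :=
        Set.indicator_nonneg (fun _ _ => zero_le_one) x
      linarith
    · have hxE : x ∈ E := by
        push_neg at hcase
        rcases le_or_gt 0 x with hx0 | hx0
        · right
          rw [abs_of_nonneg hx0] at hcase
          exact Set.mem_Icc.mpr ⟨le_of_lt hcase, hx2⟩
        · left
          rw [abs_of_neg hx0] at hcase
          exact Set.mem_Icc.mpr ⟨hx1, by linarith⟩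
      have h1 : x ^ (2 * n) ≤ 1 := by
        calc x ^ (2 * n) ≤ |x| ^ (2 * n) := by
              rw [← abs_pow]; exact le_abs_self _
          _ ≤ 1 ^ (2 * n) := pow_le_pow_left₀ (abs_nonneg x) hxabs _
          _ = 1 := one_pow _
      have h2 : E.indicator (fun _ => (1 : ℝ)) x = 1 := Set.indicator_of_mem hxE _
      have h3 : (0 : ℝ) ≤ (1 - t) ^ (2 * n) := pow_nonneg (by linarith) _
      linarith
  have hnn : (0 : ℝ → ℝ) ≤ᵐ[μ] fun x => x ^ (2 * n) := by
    refine Filter.Eventually.of_forall fun x => ?_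
    have hsq : x ^ (2 * n) = (x ^ n) ^ 2 := by rw [← pow_mul, mul_comm]
    show (0 : ℝ) ≤ x ^ (2 * n)
    rw [hsq]
    exact sq_nonneg _
  calc ∫ x, x ^ (2 * n) ∂μ
      ≤ ∫ x, ((1 - t) ^ (2 * n) + E.indicator (fun _ => (1 : ℝ)) x) ∂μ :=
        integral_mono_of_nonneg hnn hgint hle
    _ = (1 - t) ^ (2 * n) + (μ E).toReal := by
        rw [integral_add (integrable_const _) ((integrable_const (1 : ℝ)).indicator hEm),
          integral_const, integral_indicator_const _ hEm]
        simp
        rfl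

end HeisAux
namespace HeisAux
open Heis Filter MeasureTheory

set_option maxHeartbeats 2000000 in
theorem mainAux (α : ℝ) (hα : 0 < α) :
    ∃ c₁ : ℝ, 0 < c₁ ∧ ∃ t₀ : ℝ, 0 < t₀ ∧
      ∀ (T : lp (fun _ : Heis ℤ => ℂ) 2 →L[ℂ] lp (fun _ : Heis ℤ => ℂ) 2),
        (∀ (f : lp (fun _ : Heis ℤ => ℂ) 2) (g : Heis ℤ),
          (T f : ∀ _ : Heis ℤ, ℂ) g
            = (1 / 4 : ℂ) * ((f : ∀ _ : Heis ℤ, ℂ) (g * Heis.xgen)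
              + (f : ∀ _ : Heis ℤ, ℂ) (g * Heis.xgen⁻¹)
              + (f : ∀ _ : Heis ℤ, ℂ) (g * Heis.ygen)
              + (f : ∀ _ : Heis ℤ, ℂ) (g * Heis.ygen⁻¹))) →
        ∀ μ : Measure ℝ,
          μ (Set.Icc (-1 : ℝ) 1)ᶜ = 0 →
          (∀ k : ℕ, (∫ x : ℝ, x ^ k ∂μ)
              = (inner ℂ ((T ^ k) (lp.single 2 (1 : Heis ℤ) (1 : ℂ)))
                  (lp.single 2 (1 : Heis ℤ) (1 : ℂ)) : ℂ).re) →
          ∀ t : ℝ, 0 < t → t < t₀ →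
            c₁ * t ^ (2 + α)
              ≤ (μ (Set.Icc (-1 : ℝ) (-1 + t) ∪ Set.Icc (1 - t) 1)).toReal := by
  classical
  -- eventual smallness conditions
  have h1 : ∀ᶠ t in nhdsWithin (0 : ℝ) (Set.Ioi 0), t < 1 / 2 := by
    have hid : Tendsto (fun t : ℝ => t) (nhdsWithin 0 (Set.Ioi 0)) (nhds 0) :=
      tendsto_id.mono_left nhdsWithin_le_nhds
    exact hid.eventually_lt_const (by norm_num)
  have h2 : ∀ᶠ t in nhdsWithin (0 : ℝ) (Set.Ioi 0), 1 ≤ -Real.log t := by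
    have hlog : Tendsto (fun t : ℝ => -Real.log t) (nhdsWithin 0 (Set.Ioi 0)) atTop :=
      tendsto_neg_atBot_atTop.comp Real.tendsto_log_nhdsGT_zero
    exact hlog.eventually_ge_atTop 1
  have h3 : ∀ᶠ t in nhdsWithin (0 : ℝ) (Set.Ioi 0),
      93312 * (Real.log t * t) ^ 2 ≤ 1 := by
    have h := tendsto_log_mul_rpow_nhdsGT_zero (r := 1) one_pos
    simp only [Real.rpow_one] at h
    have h' : Tendsto (fun t : ℝ => 93312 * (Real.log t * t) ^ 2)
        (nhdsWithin 0 (Set.Ioi 0)) (nhds (93312 * (0 : ℝ) ^ 2)) := (h.pow 2).const_mul _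
    have h'' : Tendsto (fun t : ℝ => 93312 * (Real.log t * t) ^ 2)
        (nhdsWithin 0 (Set.Ioi 0)) (nhds 0) := by simpa using h'
    exact h''.eventually_le_const (by norm_num)
  have h4 : ∀ᶠ t in nhdsWithin (0 : ℝ) (Set.Ioi 0),
      (Real.log t * t ^ (α / 2 : ℝ)) ^ 2 ≤ 1 := by
    have h := tendsto_log_mul_rpow_nhdsGT_zero (half_pos hα)
    have h' : Tendsto (fun t : ℝ => (Real.log t * t ^ (α / 2 : ℝ)) ^ 2)
        (nhdsWithin 0 (Set.Ioi 0)) (nhds ((0 : ℝ) ^ 2)) := h.pow 2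
    have h'' : Tendsto (fun t : ℝ => (Real.log t * t ^ (α / 2 : ℝ)) ^ 2)
        (nhdsWithin 0 (Set.Ioi 0)) (nhds 0) := by simpa using h'
    exact h''.eventually_le_const (by norm_num)
  have hev := ((h1.and h2).and (h3.and h4))
  rw [Filter.eventually_iff] at hev
  rcases mem_nhdsGT_iff_exists_Ioo_subset.mp hev with ⟨t₀, ht₀mem, hsub⟩
  refine ⟨(93312 : ℝ)⁻¹, by norm_num, t₀, ht₀mem, ?_⟩
  intro T hT μ hsupp hmom t ht htt₀
  obtain ⟨⟨ht2, hL1⟩, hC3, hC4⟩ := hsub ⟨ht, htt₀⟩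
  set L : ℝ := -Real.log t with hLdef
  have hL0 : (0 : ℝ) < L := lt_of_lt_of_le one_pos hL1
  have ht1 : t ≤ 1 := by linarith
  -- μ is a probability measure
  have hprob1 : (μ Set.univ).toReal = 1 := by
    have h0 := hmom 0
    rw [moment_re T hT 0] at h0
    simp only [pow_zero] at h0
    rw [MeasureTheory.integral_const] at h0
    simp only [smul_eq_mul, mul_one] at h0
    rw [show (μ Set.univ).toReal = μ.real Set.univ from rfl, h0]
    simp [cnt_zero]
  have htop : μ Set.univ ≠ ⊤ := by
    intro h
    rw [h] at hprob1
    simp at hprob1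
  have huniv : μ Set.univ = 1 := by
    have := ENNReal.ofReal_toReal htop
    rw [hprob1] at this
    rw [← this]
    simp
  have : IsProbabilityMeasure μ := ⟨huniv⟩
  -- choose n
  set n : ℕ := ⌈2 * L / t⌉₊ with hndef
  have hn1 : 1 ≤ n := Nat.one_le_iff_ne_zero.mpr (by
    have : 0 < n := Nat.ceil_pos.mpr (by positivity)
    omega)
  have hn1R : (1 : ℝ) ≤ (n : ℝ) := by exact_mod_cast hn1
  have hnge : 2 * L / t ≤ (n : ℝ) := Nat.le_ceil _
  have hnle : (n : ℝ) ≤ 3 * L / t := by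
    have hceil : (n : ℝ) < 2 * L / t + 1 := Nat.ceil_lt_add_one (by positivity)
    have hLt : 1 ≤ L / t := by
      rw [le_div_iff₀ ht]
      linarith
    have : 2 * L / t + 1 ≤ 3 * L / t := by
      have : 2 * L / t + L / t = 3 * L / t := by ring
      linarith
    linarith
  -- moment value and lower bound
  have hmval : ∫ x, x ^ (2 * n) ∂μ = (cnt (2 * n) 1 : ℝ) / 4 ^ (2 * n) := by
    rw [hmom (2 * n), moment_re T hT]
  have hmaster := master n hn1
  have hmR : (16 : ℝ) ^ n ≤ 5184 * (n : ℝ) ^ 2 * (cnt (n + n) 1 : ℝ) := by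
    exact_mod_cast hmaster
  have h4pow : (4 : ℝ) ^ (2 * n) = 16 ^ n := by
    rw [pow_mul]
    norm_num
  have hcnt_eq : cnt (2 * n) 1 = cnt (n + n) 1 := by rw [two_mul]
  have hlow : 1 / (5184 * (n : ℝ) ^ 2) ≤ (cnt (2 * n) 1 : ℝ) / 4 ^ (2 * n) := by
    rw [hcnt_eq, h4pow, div_le_div_iff₀ (by positivity) (by positivity)]
    nlinarith [hmR]
  -- key integral inequality
  have hkey := key_integral μ hsupp t ht ht1 n
  -- (1-t)^(2n) ≤ t^4
  have hexp : (1 - t) ^ (2 * n) ≤ t ^ (4 : ℕ) := by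
    have he1 : (1 - t) ≤ Real.exp (-t) := by
      have := Real.add_one_le_exp (-t)
      linarith
    have he2 : (1 - t) ^ (2 * n) ≤ Real.exp (-t) ^ (2 * n) :=
      pow_le_pow_left₀ (by linarith) he1 _
    have he3 : Real.exp (-t) ^ (2 * n) = Real.exp (-(t * (2 * n))) := by
      rw [← Real.exp_nat_mul]
      congr 1
      push_cast
      ring
    have htn : 2 * L ≤ t * n := by
      rw [div_le_iff₀ ht] at hnge
      linarith [hnge]
    have he4 : Real.exp (-(t * (2 * n))) ≤ Real.exp (-(4 * L)) := by
      apply Real.exp_le_exp.mpr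
      push_cast
      nlinarith [htn]
    have he5 : Real.exp (-(4 * L)) = t ^ (4 : ℕ) := by
      have heq : -(4 * L) = (4 : ℕ) * Real.log t := by
        rw [hLdef]
        push_cast
        ring
      rw [heq, Real.exp_nat_mul, Real.exp_log ht]
    calc (1 - t) ^ (2 * n) ≤ Real.exp (-t) ^ (2 * n) := he2
      _ = Real.exp (-(t * (2 * n))) := he3
      _ ≤ Real.exp (-(4 * L)) := he4
      _ = t ^ (4 : ℕ) := he5
  -- measure of ends lower bound
  have hEbound : 1 / (5184 * (n : ℝ) ^ 2) - t ^ (4 : ℕ)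
      ≤ (μ (Set.Icc (-1 : ℝ) (-1 + t) ∪ Set.Icc (1 - t) 1)).toReal := by
    have := hkey
    rw [hmval] at this
    linarith [hlow, hexp, this]
  -- fraction comparison
  have hnsq : (n : ℝ) ^ 2 ≤ 9 * L ^ 2 / t ^ 2 := by
    have hsq : (n : ℝ) ^ 2 ≤ (3 * L / t) ^ 2 :=
      pow_le_pow_left₀ (by positivity) hnle 2
    have heq : (3 * L / t) ^ 2 = 9 * L ^ 2 / t ^ 2 := by
      rw [div_pow]
      ring_nf
    linarith [hsq, heq.symm.le, heq.le]
  have hfrac : t ^ 2 / (46656 * L ^ 2) ≤ 1 / (5184 * (n : ℝ) ^ 2) := by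
    rw [div_le_div_iff₀ (by positivity) (by positivity)]
    have hmul : t ^ 2 * (n : ℝ) ^ 2 ≤ t ^ 2 * (9 * L ^ 2 / t ^ 2) :=
      mul_le_mul_of_nonneg_left hnsq (sq_nonneg t)
    have heq : t ^ 2 * (9 * L ^ 2 / t ^ 2) = 9 * L ^ 2 := by
      field_simp
    nlinarith [hmul, heq.le, heq.symm.le]
  -- t^4 small
  have hC3' : 93312 * (L ^ 2 * t ^ 2) ≤ 1 := by
    have heq : (Real.log t * t) ^ 2 = L ^ 2 * t ^ 2 := by
      rw [hLdef]
      ring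
    linarith [hC3, heq.le, heq.symm.le]
  have ht4 : t ^ (4 : ℕ) ≤ t ^ 2 / (93312 * L ^ 2) := by
    rw [le_div_iff₀ (by positivity)]
    nlinarith [hC3', sq_nonneg t]
  -- rpow manipulation
  have hrpow : t ^ (2 + α) = t ^ (2 : ℕ) * t ^ α := by
    rw [Real.rpow_add ht]
    congr 1
    rw [← Real.rpow_natCast t 2]
    norm_num
  have hC4' : L ^ 2 * t ^ α ≤ 1 := by
    have heq : (Real.log t * t ^ (α / 2 : ℝ)) ^ 2 = L ^ 2 * t ^ α := by
      have hx : (t ^ (α / 2 : ℝ)) ^ (2 : ℕ) = t ^ α := by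
        rw [← Real.rpow_natCast (t ^ (α / 2 : ℝ)) 2, ← Real.rpow_mul ht.le]
        norm_num
      calc (Real.log t * t ^ (α / 2 : ℝ)) ^ 2
          = (Real.log t) ^ 2 * (t ^ (α / 2 : ℝ)) ^ (2 : ℕ) := by ring
        _ = L ^ 2 * t ^ α := by rw [hx, hLdef]; ring
    rw [← heq]
    exact hC4
  -- final chain
  have hfinal : (93312 : ℝ)⁻¹ * t ^ (2 + α) ≤ t ^ 2 / (93312 * L ^ 2) := by
    rw [hrpow, le_div_iff₀ (by positivity)]
    have htα : (0 : ℝ) ≤ t ^ α := Real.rpow_nonneg ht.le α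
    have : (93312 : ℝ)⁻¹ * (t ^ (2 : ℕ) * t ^ α) * (93312 * L ^ 2)
        = t ^ 2 * (L ^ 2 * t ^ α) := by
      field_simp
    rw [this]
    nlinarith [hC4', sq_nonneg t]
  have hgap : t ^ 2 / (46656 * L ^ 2) - t ^ 2 / (93312 * L ^ 2)
      = t ^ 2 / (93312 * L ^ 2) := by
    field_simp
    ring
  calc (93312 : ℝ)⁻¹ * t ^ (2 + α) ≤ t ^ 2 / (93312 * L ^ 2) := hfinal
    _ = t ^ 2 / (46656 * L ^ 2) - t ^ 2 / (93312 * L ^ 2) := hgap.symm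
    _ ≤ 1 / (5184 * (n : ℝ) ^ 2) - t ^ (4 : ℕ) := by linarith [hfrac, ht4]
    _ ≤ _ := hEbound

end HeisAux

open MeasureTheory

/-- main theorem: let Δ be the Laplace operator
(1/4)(x + x⁻¹ + y + y⁻¹) acting on ℓ²(H) of the discrete Heisenberg group H, δₑ the
indicator of the identity, and μ the spectral measure of Δ at δₑ (characterized as
the measure on ℝ supported in [-1,1] whose k-th moment is ⟨Δ^k δₑ, δₑ⟩ for every k).
Then for every α > 0 there is c₁ > 0 such that for all sufficiently small t > 0,
μ([-1,-1+t] ∪ [1-t,1]) ≥ c₁ t^{2+α}. -/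
theorem heisenberg_spectral_measure_near_one (α : ℝ) (hα : 0 < α) :
    ∃ c₁ : ℝ, 0 < c₁ ∧ ∃ t₀ : ℝ, 0 < t₀ ∧
      ∀ (T : lp (fun _ : Heis ℤ => ℂ) 2 →L[ℂ] lp (fun _ : Heis ℤ => ℂ) 2),
        (∀ (f : lp (fun _ : Heis ℤ => ℂ) 2) (g : Heis ℤ),
          (T f : ∀ _ : Heis ℤ, ℂ) g
            = (1 / 4 : ℂ) * ((f : ∀ _ : Heis ℤ, ℂ) (g * Heis.xgen)
              + (f : ∀ _ : Heis ℤ, ℂ) (g * Heis.xgen⁻¹)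
              + (f : ∀ _ : Heis ℤ, ℂ) (g * Heis.ygen)
              + (f : ∀ _ : Heis ℤ, ℂ) (g * Heis.ygen⁻¹))) →
        ∀ μ : Measure ℝ,
          μ (Set.Icc (-1 : ℝ) 1)ᶜ = 0 →
          (∀ k : ℕ, (∫ x : ℝ, x ^ k ∂μ)
              = (inner ℂ ((T ^ k) (lp.single 2 (1 : Heis ℤ) (1 : ℂ)))
                  (lp.single 2 (1 : Heis ℤ) (1 : ℂ)) : ℂ).re) →
          ∀ t : ℝ, 0 < t → t < t₀ →
            c₁ * t ^ (2 + α)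
              ≤ (μ (Set.Icc (-1 : ℝ) (-1 + t) ∪ Set.Icc (1 - t) 1)).toReal :=
  HeisAux.mainAux α hα
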